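/- Let (X,d) be a proper metric space (every closed bounded subset is compact) and m a nonnegative Radon measure on X. Fix a real N > 1. Let μ = ρ·m be a Borel probability measure on X whose density ρ is bounded and whose support is bounded, and let (ν_n) be a sequence of Borel probability measures on X, all concentrated on one fixed bounded subset of X, such that ν_n → μ weakly in duality with bounded continuous functions and U_N(ν_n) → U_N(μ). Then ν_n converges to μ in duality with bounded Borel functions: for every bounded Borel function h : X → ℝ, ∫ h dν_n → ∫ h·ρ dm. -/

import Mathlib

set_option maxHeartbeats 2000000

open Real MeasureTheory Filter
open scoped ENNReal NNReal

theorem rpow_tangent {a s t : ℝ} (ha : 0 < a) (ha1 : a < 1) (hs : 0 < s) (ht : 0 ≤ t) :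
    t ^ a ≤ (1 - a) * s ^ a + a * s ^ (a - 1) * t := by
  have h := Real.geom_mean_le_arith_mean2_weighted (w₁ := a) (w₂ := 1-a) (p₁ := t) (p₂ := s)
    (le_of_lt ha) (by linarith) ht hs.le (by ring)
  have hsp : (0:ℝ) < s ^ (a-1) := Real.rpow_pos_of_pos hs _
  have h2 : t ^ a * s ^ (1-a) * s ^ (a-1) ≤ (a*t + (1-a)*s) * s ^ (a-1) :=
    mul_le_mul_of_nonneg_right h hsp.le
  have e1 : s ^ (1-a) * s ^ (a-1) = 1 := by
    rw [← Real.rpow_add hs]; norm_num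
  have e2 : s * s ^ (a-1) = s ^ a := by
    nth_rewrite 1 [← Real.rpow_one s]
    rw [← Real.rpow_add hs]; ring_nf
  calc t ^ a = t ^ a * (s ^ (1-a) * s ^ (a-1)) := by rw [e1, mul_one]
  _ = t ^ a * s ^ (1-a) * s ^ (a-1) := by ring
  _ ≤ (a*t + (1-a)*s) * s ^ (a-1) := h2
  _ = a * s ^ (a-1) * t + (1-a) * (s * s^(a-1)) := by ring
  _ = (1 - a) * s ^ a + a * s ^ (a - 1) * t := by rw [e2]; ring

theorem rpow_lip {a η s t : ℝ} (ha : 0 < a) (ha1 : a < 1) (hη : 0 < η)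
    (hs : η ≤ s) (ht : η ≤ t) : |t ^ a - s ^ a| ≤ a * η ^ (a-1) * |t - s| := by
  have key : ∀ u v : ℝ, η ≤ u → η ≤ v → u ≤ v → v ^ a - u ^ a ≤ a * η ^ (a-1) * (v - u) := by
    intro u v hu hv huv
    have hu0 : 0 < u := lt_of_lt_of_le hη hu
    have h1 := rpow_tangent ha ha1 hu0 (le_trans hη.le hv)
    have h2 : u ^ (a-1) ≤ η ^ (a-1) :=
      Real.rpow_le_rpow_of_nonpos hη hu (by linarith)
    have e : u ^ a = u ^ (a-1) * u := by
      nth_rewrite 1 [show a = (a-1)+1 by ring]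
      rw [Real.rpow_add_one hu0.ne']
    nlinarith [mul_le_mul_of_nonneg_right h2 (sub_nonneg.2 huv)]
  rcases le_total s t with h | h
  · rw [abs_of_nonneg (sub_nonneg.2 (Real.rpow_le_rpow (by linarith) h ha.le)),
      abs_of_nonneg (sub_nonneg.2 h)]
    exact key s t hs ht h
  · rw [abs_of_nonpos (sub_nonpos.2 (Real.rpow_le_rpow (by linarith) h ha.le)),
      abs_of_nonpos (sub_nonpos.2 h)]
    have := key t s ht hs h
    linarith

theorem rpow_lip_neg {a η s t : ℝ} (ha : 0 < a) (ha1 : a < 1) (hη : 0 < η)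
    (hs : η ≤ s) (ht : η ≤ t) : |t ^ (a-1) - s ^ (a-1)| ≤ (1-a) * η ^ (a-2) * |t - s| := by
  have key : ∀ u v : ℝ, η ≤ u → η ≤ v → u ≤ v →
      u ^ (a-1) - v ^ (a-1) ≤ (1-a) * η ^ (a-2) * (v - u) := by
    intro u v hu hv huv
    have hu0 : 0 < u := lt_of_lt_of_le hη hu
    have hv0 : 0 < v := lt_of_lt_of_le hη hv
    set b := 1 - a with hb
    have hb0 : 0 < b := by simp only [hb]; linarith
    have hb1 : b < 1 := by simp only [hb]; linarith
    have h1 := rpow_tangent hb0 hb1 hu0 hv0.le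
    have hub : (0:ℝ) < u ^ b := Real.rpow_pos_of_pos hu0 _
    have hvb : (0:ℝ) < v ^ b := Real.rpow_pos_of_pos hv0 _
    have e1 : u ^ (a-1) = (u ^ b)⁻¹ := by
      rw [← Real.rpow_neg hu0.le]; norm_num [hb]
    have e2 : v ^ (a-1) = (v ^ b)⁻¹ := by
      rw [← Real.rpow_neg hv0.le]; norm_num [hb]
    have key2 : u ^ (a-1) - v ^ (a-1) = (v ^ b - u ^ b) / (u ^ b * v ^ b) := by
      rw [e1, e2]; field_simp
    rw [key2]
    have eu : u ^ b = u ^ (b-1) * u := by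
      nth_rewrite 1 [show b = (b-1)+1 by ring]
      rw [Real.rpow_add_one hu0.ne']
    have h3 : v ^ b - u ^ b ≤ b * u ^ (b-1) * (v - u) := by nlinarith
    have h4 : u ^ (b-1) ≤ η ^ (b-1) :=
      Real.rpow_le_rpow_of_nonpos hη hu (by linarith)
    have h5 : η ^ b ≤ u ^ b := Real.rpow_le_rpow hη.le hu hb0.le
    have h6 : η ^ b ≤ v ^ b := Real.rpow_le_rpow hη.le hv hb0.le
    have hηb : (0:ℝ) < η ^ b := Real.rpow_pos_of_pos hη _
    have hd : η ^ b * η ^ b ≤ u ^ b * v ^ b := by nlinarith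
    have hnum : v ^ b - u ^ b ≤ b * η ^ (b-1) * (v - u) := by
      have := mul_le_mul_of_nonneg_right h4 (sub_nonneg.2 huv)
      nlinarith
    have hnum0 : 0 ≤ b * η ^ (b-1) * (v - u) := by
      have : (0:ℝ) ≤ η ^ (b-1) := Real.rpow_nonneg hη.le _
      have h7 : (0:ℝ) ≤ v - u := sub_nonneg.2 huv
      positivity
    have hdiv : η ^ (b-1) / (η ^ b * η ^ b) = η ^ (a-2) := by
      rw [← Real.rpow_add hη, ← Real.rpow_sub hη]
      congr 1
      simp only [hb]; ring
    calc (v ^ b - u ^ b) / (u ^ b * v ^ b)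
        ≤ (b * η ^ (b-1) * (v-u)) / (η ^ b * η ^ b) :=
          div_le_div₀ hnum0 hnum (by positivity) hd
      _ = b * (v-u) * (η ^ (b-1) / (η ^ b * η ^ b)) := by ring
      _ = (1-a) * η ^ (a-2) * (v - u) := by rw [hdiv, hb]; ring
  rcases le_total s t with h | h
  · have h0 : t ^ (a-1) ≤ s ^ (a-1) :=
      Real.rpow_le_rpow_of_nonpos (lt_of_lt_of_le hη hs) h (by linarith)
    rw [abs_of_nonpos (by linarith), abs_of_nonneg (sub_nonneg.2 h)]
    have := key s t hs ht h
    linarith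
  · have h0 : s ^ (a-1) ≤ t ^ (a-1) :=
      Real.rpow_le_rpow_of_nonpos (lt_of_lt_of_le hη ht) h (by linarith)
    rw [abs_of_nonneg (by linarith), abs_of_nonpos (sub_nonpos.2 h)]
    have := key t s ht hs h
    linarith

theorem clamp_abs {lo hi t v : ℝ} (h1 : lo ≤ v) (h2 : v ≤ hi) :
    |max lo (min t hi) - v| ≤ |t - v| := by
  rcases le_total t lo with h | h
  · rcases le_total t hi with h' | h'
    · rw [min_eq_left h', max_eq_left (le_trans h ?_)]
      · rw [abs_of_nonpos (by linarith), abs_of_nonpos (by linarith)]; linarith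
      · linarith
    · have : lo ≤ hi := le_trans h1 h2
      rw [min_eq_right h', max_eq_right this]
      rw [abs_of_nonpos (by linarith)]
      have : |t - v| = t - v ∨ |t - v| = -(t-v) := abs_choice _
      rcases this with h'' | h'' <;> rw [h''] <;> linarith
  · rcases le_total t hi with h' | h'
    · rw [min_eq_left h', max_eq_right h]
    · rw [min_eq_right h', max_eq_right (le_trans h1 h2)]
      rw [abs_of_nonneg (by linarith), abs_of_nonneg (by linarith)]; linarith

theorem exists_good_u {X : Type*} [MetricSpace X] [MeasurableSpace X] [BorelSpace X]
    (m : Measure X) [m.WeaklyRegular]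
    {K : Set X} (hKc : IsClosed K) (hKfin : m K ≠ ⊤)
    {ρ : X → ℝ} (hρmeas : Measurable ρ) (hρnonneg : ∀ x, 0 ≤ ρ x)
    {C1 : ℝ} (hC1 : 1 ≤ C1) (hρle : ∀ x, ρ x ≤ C1)
    {a : ℝ} (ha : 0 < a) (ha1 : a < 1) {γ : ℝ} (hγ : 0 < γ) :
    ∃ η : ℝ, ∃ u : X → ℝ, 0 < η ∧ η ≤ 1 ∧ Continuous u ∧ (∀ x, η ≤ u x) ∧ (∀ x, u x ≤ C1) ∧
      (1-a) * ∫ x in K, (u x) ^ a ∂m + a * ∫ x in K, (u x) ^ (a-1) * ρ x ∂m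
        ≤ (∫ x in K, (ρ x) ^ a ∂m) + γ := by
  have hKm : MeasurableSet K := hKc.measurableSet
  haveI : IsFiniteMeasure (m.restrict K) :=
    ⟨by rw [Measure.restrict_apply_univ]; exact lt_of_le_of_ne le_top hKfin⟩
  have hC10 : (0:ℝ) < C1 := by linarith
  -- helper: integrability of bounded measurable functions on K
  have intb : ∀ f : X → ℝ, Measurable f → ∀ C : ℝ, (∀ x, |f x| ≤ C) →
      Integrable f (m.restrict K) := by
    intro f hf C hC
    exact Integrable.mono' (integrable_const C) hf.aestronglyMeasurable
      (Eventually.of_forall (by simpa using hC))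
  set cK := ∫ x in K, (ρ x) ^ a ∂m with hcK
  -- Step 1 : choose η
  have hstep1 : ∃ η : ℝ, 0 < η ∧ η ≤ 1 ∧
      (1-a) * (∫ x in K, (max (ρ x) η) ^ a ∂m)
        + a * (∫ x in K, (max (ρ x) η) ^ (a-1) * ρ x ∂m) ≤ cK + γ / 2 := by
    set φ : ℕ → X → ℝ := fun j x =>
      (1-a) * (max (ρ x) (1/(j+1))) ^ a + a * (max (ρ x) (1/(j+1))) ^ (a-1) * ρ x with hφ
    have hηj : ∀ j : ℕ, (0:ℝ) < 1/(j+1) := by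
      intro j; positivity
    have hηj1 : ∀ j : ℕ, (1:ℝ)/(j+1) ≤ 1 := by
      intro j
      rw [div_le_one (by positivity)]
      exact le_add_of_nonneg_left (Nat.cast_nonneg j)
    have hmax_meas : ∀ j : ℕ, Measurable fun x => max (ρ x) (1/((j:ℝ)+1)) := fun j =>
      hρmeas.max measurable_const
    have hφmeas : ∀ j, Measurable (φ j) := by
      intro j
      exact (((hmax_meas j).pow measurable_const).const_mul _).add
        ((((hmax_meas j).pow measurable_const).const_mul _).mul hρmeas)
    have hφbdd : ∀ j x, |φ j x| ≤ C1 ^ a := by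
      intro j x
      simp only [hφ]
      have h1 : 0 < max (ρ x) (1/((j:ℝ)+1)) := lt_max_of_lt_right (hηj j)
      have h2 : max (ρ x) (1/((j:ℝ)+1)) ≤ C1 := max_le (hρle x) (le_trans (hηj1 j) hC1)
      have h3 : (max (ρ x) (1/((j:ℝ)+1))) ^ a ≤ C1 ^ a := Real.rpow_le_rpow h1.le h2 ha.le
      have h4 : (max (ρ x) (1/((j:ℝ)+1))) ^ (a-1) * ρ x ≤ (max (ρ x) (1/((j:ℝ)+1)))^a := by
        have e : (max (ρ x) (1/((j:ℝ)+1)))^a = (max (ρ x) (1/((j:ℝ)+1)))^(a-1) * max (ρ x) (1/((j:ℝ)+1)) := by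
          nth_rewrite 1 [show a = (a-1)+1 by ring]
          rw [Real.rpow_add_one h1.ne']
        rw [e]
        exact mul_le_mul_of_nonneg_left (le_max_left _ _) (Real.rpow_nonneg h1.le _)
      have h5 : 0 ≤ (max (ρ x) (1/((j:ℝ)+1)))^(a-1) * ρ x :=
        mul_nonneg (Real.rpow_nonneg h1.le _) (hρnonneg x)
      have h6 : 0 ≤ (max (ρ x) (1/((j:ℝ)+1)))^a := Real.rpow_nonneg h1.le _
      rw [abs_of_nonneg (by nlinarith)]
      nlinarith [Real.rpow_nonneg hC10.le a]
    have htend : Tendsto (fun j => ∫ x in K, φ j x ∂m) atTop (nhds cK) := by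
      apply MeasureTheory.tendsto_integral_of_dominated_convergence (fun _ => C1 ^ a)
        (fun j => (hφmeas j).aestronglyMeasurable) (integrable_const _)
        (fun j => Eventually.of_forall (fun x => hφbdd j x))
      · apply Eventually.of_forall
        intro x
        rcases lt_or_eq_of_le (hρnonneg x) with hx | hx
        · -- ρ x > 0 : eventually constant
          have hev : ∀ᶠ j : ℕ in atTop, φ j x = (ρ x) ^ a := by
            have : ∀ᶠ j : ℕ in atTop, (1:ℝ)/(j+1) ≤ ρ x := by
              have := tendsto_one_div_add_atTop_nhds_zero_nat (𝕜 := ℝ)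
              exact this.eventually_le_const hx
            filter_upwards [this] with j hj
            have hmax : max (ρ x) (1/((j:ℝ)+1)) = ρ x := max_eq_left hj
            rw [hφ]
            simp only [hmax]
            have e : (ρ x)^(a-1) * ρ x = (ρ x)^a := by
              rw [← Real.rpow_add_one (ne_of_gt hx) (a-1)]
              norm_num
            rw [mul_assoc, e]; ring
          exact Tendsto.congr' (hev.mono fun j hj => hj.symm) tendsto_const_nhds
        · -- ρ x = 0
          have hx' : ρ x = 0 := hx.symm
          have : ∀ j : ℕ, φ j x = (1-a) * ((1:ℝ)/(j+1)) ^ a := by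
            intro j
            rw [hφ]; simp only [hx', max_eq_right (hηj j).le, mul_zero, add_zero]
          rw [funext this] at *
          have h0 : Tendsto (fun j : ℕ => ((1:ℝ)/(j+1)) ^ a) atTop (nhds 0) := by
            have hc : ContinuousAt (fun t : ℝ => t ^ a) 0 :=
              Real.continuousAt_rpow_const 0 a (Or.inr ha.le)
            have := hc.tendsto.comp tendsto_one_div_add_atTop_nhds_zero_nat
            simpa [Function.comp_def, Real.zero_rpow ha.ne'] using this
          have : Tendsto (fun j : ℕ => (1-a) * ((1:ℝ)/(j+1)) ^ a) atTop (nhds 0) := by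
            simpa using h0.const_mul (1-a)
          simpa [hx', Real.zero_rpow ha.ne'] using this
    have : ∀ᶠ j : ℕ in atTop, ∫ x in K, φ j x ∂m ≤ cK + γ/2 := by
      apply htend.eventually_le_const; linarith
    obtain ⟨j, hj⟩ := this.exists
    have i1 : Integrable (fun x => (max (ρ x) (1/((j:ℝ)+1))) ^ a) (m.restrict K) := by
      apply intb _ ((hmax_meas j).pow measurable_const) (C1^a)
      intro x
      rw [abs_of_nonneg (Real.rpow_nonneg (le_max_of_le_right (hηj j).le) _)]
      exact Real.rpow_le_rpow (le_max_of_le_right (hηj j).le)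
        (max_le (hρle x) (le_trans (hηj1 j) hC1)) ha.le
    have i2 : Integrable (fun x => (max (ρ x) (1/((j:ℝ)+1))) ^ (a-1) * ρ x) (m.restrict K) := by
      apply intb _ (((hmax_meas j).pow measurable_const).mul hρmeas) ((1/((j:ℝ)+1))^(a-1) * C1)
      intro x
      have h1 : (0:ℝ) < max (ρ x) (1/((j:ℝ)+1)) := lt_max_of_lt_right (hηj j)
      simp only [Pi.mul_apply]
      rw [abs_mul, abs_of_nonneg (Real.rpow_nonneg h1.le _), abs_of_nonneg (hρnonneg x)]
      apply mul_le_mul _ (hρle x) (hρnonneg x) (Real.rpow_nonneg (hηj j).le _)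
      exact Real.rpow_le_rpow_of_nonpos (hηj j) (le_max_right _ _) (by linarith)
    refine ⟨1/((j:ℝ)+1), hηj j, hηj1 j, ?_⟩
    have hsplit : ∫ x in K, φ j x ∂m =
        (1-a) * (∫ x in K, (max (ρ x) (1/((j:ℝ)+1))) ^ a ∂m)
          + a * (∫ x in K, (max (ρ x) (1/((j:ℝ)+1))) ^ (a-1) * ρ x ∂m) := by
      calc ∫ x in K, φ j x ∂m
          = ∫ x in K, ((1-a) * (max (ρ x) (1/((j:ℝ)+1))) ^ a
              + a * ((max (ρ x) (1/((j:ℝ)+1))) ^ (a-1) * ρ x)) ∂m := by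
            apply integral_congr_ae
            apply Eventually.of_forall
            intro x
            simp only [hφ]
            ring
        _ = (∫ x in K, (1-a) * (max (ρ x) (1/((j:ℝ)+1))) ^ a ∂m)
              + ∫ x in K, a * ((max (ρ x) (1/((j:ℝ)+1))) ^ (a-1) * ρ x) ∂m :=
            integral_add (i1.const_mul _) (i2.const_mul _)
        _ = (1-a) * (∫ x in K, (max (ρ x) (1/((j:ℝ)+1))) ^ a ∂m)
              + a * (∫ x in K, (max (ρ x) (1/((j:ℝ)+1))) ^ (a-1) * ρ x ∂m) := by
            rw [integral_const_mul, integral_const_mul]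
    rw [← hsplit]
    exact hj
  obtain ⟨η, hη0, hη1, hηgood⟩ := hstep1
  set v : X → ℝ := fun x => max (ρ x) η with hv
  have hvmeas : Measurable v := hρmeas.max measurable_const
  have hvlo : ∀ x, η ≤ v x := fun x => le_max_right _ _
  have hvhi : ∀ x, v x ≤ C1 := fun x => max_le (hρle x) (le_trans hη1 hC1)
  have hfint : Integrable (K.indicator v) m := by
    rw [integrable_indicator_iff hKm]
    apply intb v hvmeas C1
    intro x
    rw [abs_of_nonneg (le_trans hη0.le (hvlo x))]
    exact hvhi x
  have hηa1 : (0:ℝ) ≤ η ^ (a-1) := Real.rpow_nonneg hη0.le _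
  have hηa2 : (0:ℝ) ≤ η ^ (a-2) := Real.rpow_nonneg hη0.le _
  set L : ℝ := a * η ^ (a-1) + (1-a) * η ^ (a-2) * C1 + 1 with hL
  have hLpos : 0 < L := by
    have h1 : (0:ℝ) ≤ a * η ^ (a-1) := mul_nonneg ha.le hηa1
    have h2 : (0:ℝ) ≤ (1-a) * η ^ (a-2) * C1 :=
      mul_nonneg (mul_nonneg (by linarith) hηa2) hC10.le
    linarith
  have hκpos : 0 < γ / (4 * L) := by positivity
  obtain ⟨g, hg, hgint⟩ := hfint.exists_boundedContinuous_integral_sub_le hκpos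
  set u : X → ℝ := fun x => max η (min (g x) C1) with hu
  have hucont : Continuous u := continuous_const.max (g.continuous.min continuous_const)
  have humeas : Measurable u := hucont.measurable
  have hulo : ∀ x, η ≤ u x := fun x => le_max_left _ _
  have huhi : ∀ x, u x ≤ C1 := fun x => max_le (le_trans hη1 hC1) (min_le_right _ _)
  -- closeness on K
  have hiuv : Integrable (fun x => |u x - v x|) (m.restrict K) := by
    apply intb _ (humeas.sub hvmeas).abs (2*C1)
    intro x
    rw [abs_abs]
    have h1 : |u x| ≤ C1 := by rw [abs_of_nonneg (le_trans hη0.le (hulo x))]; exact huhi x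
    have h2 : |v x| ≤ C1 := by rw [abs_of_nonneg (le_trans hη0.le (hvlo x))]; exact hvhi x
    calc |u x - v x| ≤ |u x| + |v x| := abs_sub _ _
      _ ≤ 2*C1 := by linarith
  have hclose : ∫ x in K, |u x - v x| ∂m ≤ γ / (4 * L) := by
    have hnint : Integrable (fun x => ‖K.indicator v x - g x‖) m := (hfint.sub hgint).norm
    calc ∫ x in K, |u x - v x| ∂m ≤ ∫ x in K, ‖K.indicator v x - g x‖ ∂m := by
          apply setIntegral_mono_on hiuv hnint.integrableOn hKm
          intro x hx
          rw [Set.indicator_of_mem hx, Real.norm_eq_abs, abs_sub_comm (v x) (g x)]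
          exact clamp_abs (hvlo x) (hvhi x)
      _ ≤ ∫ x, ‖K.indicator v x - g x‖ ∂m :=
          setIntegral_le_integral hnint (Eventually.of_forall (fun x => norm_nonneg _))
      _ ≤ γ / (4 * L) := hg
  -- integrability of the four pieces
  have iu1 : Integrable (fun x => (u x) ^ a) (m.restrict K) := by
    apply intb _ (humeas.pow measurable_const) (C1 ^ a)
    intro x
    rw [abs_of_nonneg (Real.rpow_nonneg (le_trans hη0.le (hulo x)) _)]
    exact Real.rpow_le_rpow (le_trans hη0.le (hulo x)) (huhi x) ha.le
  have iv1 : Integrable (fun x => (v x) ^ a) (m.restrict K) := by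
    apply intb _ (hvmeas.pow measurable_const) (C1 ^ a)
    intro x
    rw [abs_of_nonneg (Real.rpow_nonneg (le_trans hη0.le (hvlo x)) _)]
    exact Real.rpow_le_rpow (le_trans hη0.le (hvlo x)) (hvhi x) ha.le
  have iu2 : Integrable (fun x => (u x) ^ (a-1) * ρ x) (m.restrict K) := by
    apply intb _ ((humeas.pow measurable_const).mul hρmeas) (η ^ (a-1) * C1)
    intro x
    simp only [Pi.mul_apply]
    rw [abs_mul, abs_of_nonneg (Real.rpow_nonneg (le_trans hη0.le (hulo x)) _),
      abs_of_nonneg (hρnonneg x)]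
    apply mul_le_mul _ (hρle x) (hρnonneg x) hηa1
    exact Real.rpow_le_rpow_of_nonpos hη0 (hulo x) (by linarith)
  have iv2 : Integrable (fun x => (v x) ^ (a-1) * ρ x) (m.restrict K) := by
    apply intb _ ((hvmeas.pow measurable_const).mul hρmeas) (η ^ (a-1) * C1)
    intro x
    simp only [Pi.mul_apply]
    rw [abs_mul, abs_of_nonneg (Real.rpow_nonneg (le_trans hη0.le (hvlo x)) _),
      abs_of_nonneg (hρnonneg x)]
    apply mul_le_mul _ (hρle x) (hρnonneg x) hηa1
    exact Real.rpow_le_rpow_of_nonpos hη0 (hvlo x) (by linarith)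
  -- key estimates
  have key1 : |(∫ x in K, (u x) ^ a ∂m) - ∫ x in K, (v x) ^ a ∂m|
      ≤ (a * η ^ (a-1)) * (γ / (4*L)) := by
    rw [← integral_sub iu1 iv1]
    calc |∫ x in K, ((u x) ^ a - (v x) ^ a) ∂m|
        ≤ ∫ x in K, |(u x) ^ a - (v x) ^ a| ∂m := by
          simpa [Real.norm_eq_abs] using
            norm_integral_le_integral_norm (μ := m.restrict K) (fun x => (u x)^a - (v x)^a)
      _ ≤ ∫ x in K, (a * η ^ (a-1)) * |u x - v x| ∂m := by
          apply integral_mono (iu1.sub iv1).abs (hiuv.const_mul _)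
          intro x
          simp only [Pi.sub_apply]
          exact rpow_lip ha ha1 hη0 (hvlo x) (hulo x)
      _ = (a * η ^ (a-1)) * ∫ x in K, |u x - v x| ∂m := integral_const_mul _ _
      _ ≤ (a * η ^ (a-1)) * (γ / (4*L)) :=
          mul_le_mul_of_nonneg_left hclose (mul_nonneg ha.le hηa1)
  have key2 : |(∫ x in K, (u x) ^ (a-1) * ρ x ∂m) - ∫ x in K, (v x) ^ (a-1) * ρ x ∂m|
      ≤ ((1-a) * η ^ (a-2) * C1) * (γ / (4*L)) := by
    rw [← integral_sub iu2 iv2]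
    calc |∫ x in K, ((u x) ^ (a-1) * ρ x - (v x) ^ (a-1) * ρ x) ∂m|
        ≤ ∫ x in K, |(u x) ^ (a-1) * ρ x - (v x) ^ (a-1) * ρ x| ∂m := by
          simpa [Real.norm_eq_abs] using
            norm_integral_le_integral_norm (μ := m.restrict K)
              (fun x => (u x)^(a-1) * ρ x - (v x)^(a-1) * ρ x)
      _ ≤ ∫ x in K, (((1-a) * η ^ (a-2) * C1)) * |u x - v x| ∂m := by
          apply integral_mono (iu2.sub iv2).abs (hiuv.const_mul _)
          intro x
          simp only [Pi.sub_apply]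
          have e : (u x)^(a-1) * ρ x - (v x)^(a-1) * ρ x = ((u x)^(a-1) - (v x)^(a-1)) * ρ x := by
            ring
          rw [e, abs_mul, abs_of_nonneg (hρnonneg x)]
          calc |(u x)^(a-1) - (v x)^(a-1)| * ρ x
              ≤ ((1-a) * η ^ (a-2) * |u x - v x|) * C1 := by
                apply mul_le_mul (rpow_lip_neg ha ha1 hη0 (hvlo x) (hulo x)) (hρle x)
                  (hρnonneg x) (mul_nonneg (mul_nonneg (by linarith) hηa2) (abs_nonneg _))
            _ = ((1-a) * η ^ (a-2) * C1) * |u x - v x| := by ring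
      _ = ((1-a) * η ^ (a-2) * C1) * ∫ x in K, |u x - v x| ∂m := integral_const_mul _ _
      _ ≤ ((1-a) * η ^ (a-2) * C1) * (γ / (4*L)) := by
          apply mul_le_mul_of_nonneg_left hclose
          exact mul_nonneg (mul_nonneg (by linarith) hηa2) hC10.le
  refine ⟨η, u, hη0, hη1, hucont, hulo, huhi, ?_⟩
  have hb1 := (abs_le.mp key1).2
  have hb2 := (abs_le.mp key2).2
  have hsum : (a * η ^ (a-1)) * (γ / (4*L)) + ((1-a) * η ^ (a-2) * C1) * (γ / (4*L)) ≤ γ/4 := by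
    have : (a * η ^ (a-1) + (1-a) * η ^ (a-2) * C1) * (γ / (4*L)) ≤ L * (γ / (4*L)) := by
      apply mul_le_mul_of_nonneg_right _ hκpos.le
      linarith
    have hLγ : L * (γ / (4*L)) = γ/4 := by
      rw [← mul_div_assoc, mul_comm (4:ℝ) L, mul_div_mul_left γ 4 hLpos.ne']
    nlinarith
  have e1 : (1-a) * (∫ x in K, (u x) ^ a ∂m)
      ≤ (1-a) * (∫ x in K, (v x) ^ a ∂m) + (1-a) * ((a * η ^ (a-1)) * (γ / (4*L))) := by
    nlinarith [mul_le_mul_of_nonneg_left hb1 (show (0:ℝ) ≤ 1-a by linarith)]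
  have e2 : a * (∫ x in K, (u x) ^ (a-1) * ρ x ∂m)
      ≤ a * (∫ x in K, (v x) ^ (a-1) * ρ x ∂m) + a * (((1-a) * η ^ (a-2) * C1) * (γ / (4*L))) := by
    nlinarith [mul_le_mul_of_nonneg_left hb2 ha.le]
  have h1a : (1-a) * ((a * η ^ (a-1)) * (γ / (4*L))) ≤ (a * η ^ (a-1)) * (γ / (4*L)) := by
    nlinarith [mul_nonneg (mul_nonneg ha.le hηa1) hκpos.le]
  have h2a : a * (((1-a) * η ^ (a-2) * C1) * (γ / (4*L))) ≤ ((1-a) * η ^ (a-2) * C1) * (γ / (4*L)) := by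
    nlinarith [mul_nonneg (mul_nonneg (mul_nonneg (show (0:ℝ) ≤ 1-a by linarith) hηa2) hC10.le) hκpos.le]
  have hγ4 : γ/2 + γ/4 ≤ γ := by linarith
  linarith [hηgood]

theorem unif_small {X : Type*} [MetricSpace X] [MeasurableSpace X] [BorelSpace X]
    (m : Measure X) [SigmaFinite m] [m.WeaklyRegular]
    {K : Set X} (hKc : IsClosed K) (hKfin : m K ≠ ⊤)
    {ρ : X → ℝ} (hρmeas : Measurable ρ) (hρnonneg : ∀ x, 0 ≤ ρ x)
    {C1 : ℝ} (hC1 : 1 ≤ C1) (hρle : ∀ x, ρ x ≤ C1) (hρK : ∀ x, x ∉ K → ρ x = 0)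
    {a : ℝ} (ha : 0 < a) (ha1 : a < 1)
    (ν : ℕ → Measure X) [∀ n, IsProbabilityMeasure (ν n)]
    (hνK : ∀ n, ν n Kᶜ = 0)
    (hweak : ∀ f : BoundedContinuousFunction X ℝ,
      Tendsto (fun n => ∫ x, f x ∂(ν n)) atTop (nhds (∫ x, f x * ρ x ∂m)))
    (hc : Tendsto (fun n => ∫ x, (((ν n).rnDeriv m) x).toReal ^ a ∂m) atTop
      (nhds (∫ x, ρ x ^ a ∂m)))
    {ε : ℝ} (hε : 0 < ε) :
    ∃ δ : ℝ, 0 < δ ∧ ∃ n0 : ℕ, ∀ n ≥ n0, ∀ E : Set X, MeasurableSet E →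
      m E ≤ ENNReal.ofReal δ → ν n E ≤ ENNReal.ofReal ε := by
  have hKm : MeasurableSet K := hKc.measurableSet
  have hC10 : (0:ℝ) < C1 := by linarith
  have hC1a : (0:ℝ) < C1 ^ (a-1) := Real.rpow_pos_of_pos hC10 _
  set γ : ℝ := a * C1 ^ (a-1) * ε with hγdef
  have hγ : 0 < γ := by positivity
  set c : ℝ := ∫ x, ρ x ^ a ∂m with hcdef
  -- the integral of ρ^a is concentrated on K
  have hcK : ∫ x in K, ρ x ^ a ∂m = c := by
    apply setIntegral_eq_integral_of_forall_compl_eq_zero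
    intro x hx
    rw [hρK x hx, Real.zero_rpow (ne_of_gt ha)]
  -- choose η and u
  obtain ⟨η, u, hη0, hη1, hucont, hulo, huhi, hugood⟩ :=
    exists_good_u m hKc hKfin hρmeas hρnonneg hC1 hρle ha ha1 (γ := γ/2) (by positivity)
  have hu0 : ∀ x, 0 < u x := fun x => lt_of_lt_of_le hη0 (hulo x)
  -- the bounded continuous test function w = u^(a-1)
  set w : X → ℝ := fun x => u x ^ (a-1) with hwdef
  have hwcont : Continuous w := hucont.rpow_const (fun x => Or.inl (hu0 x).ne')
  have hwbdd : ∀ x, ‖w x‖ ≤ η ^ (a-1) := by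
    intro x
    rw [Real.norm_eq_abs, abs_of_nonneg (Real.rpow_nonneg (hu0 x).le _)]
    exact Real.rpow_le_rpow_of_nonpos hη0 (hulo x) (by linarith)
  set wb : BoundedContinuousFunction X ℝ :=
    BoundedContinuousFunction.ofNormedAddCommGroup w hwcont (η ^ (a-1)) hwbdd with hwb
  set P : ℝ := ∫ x, w x * ρ x ∂m with hPdef
  have hPK : ∫ x in K, u x ^ (a-1) * ρ x ∂m = P := by
    apply setIntegral_eq_integral_of_forall_compl_eq_zero
    intro x hx
    rw [hρK x hx, mul_zero]
  -- choose T
  have hT : ∃ T : ℝ, 1 ≤ T ∧ T ^ (a-1) ≤ γ/16 := by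
    have h1 : Tendsto (fun T : ℝ => T ^ (a-1)) atTop (nhds 0) := by
      have := tendsto_rpow_neg_atTop (y := 1-a) (by linarith)
      simpa [show -(1-a) = a-1 by ring] using this
    have h2 : ∀ᶠ T : ℝ in atTop, T ^ (a-1) ≤ γ/16 := h1.eventually_le_const (by positivity)
    obtain ⟨T, hT1, hT2⟩ := (h2.and (eventually_ge_atTop 1)).exists
    exact ⟨T, hT2, hT1⟩
  obtain ⟨T, hT1, hTsmall⟩ := hT
  have hT0 : (0:ℝ) < T := by linarith
  have hTa : (0:ℝ) < T ^ a := Real.rpow_pos_of_pos hT0 _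
  set δ : ℝ := (γ/16) / (T ^ a + 1) with hδdef
  have hδ0 : 0 < δ := by positivity
  refine ⟨δ, hδ0, ?_⟩
  -- eventual bounds
  have hev1 : ∀ᶠ n in atTop, |(∫ x, (((ν n).rnDeriv m) x).toReal ^ a ∂m) - c| ≤ γ/8 := by
    have := Metric.tendsto_atTop.mp hc (γ/8) (by positivity)
    obtain ⟨n1, hn1⟩ := this
    rw [eventually_atTop]
    exact ⟨n1, fun n hn => by simpa [Real.dist_eq] using (hn1 n hn).le⟩
  have hev2 : ∀ᶠ n in atTop, |(∫ x, w x ∂(ν n)) - P| ≤ γ/8 := by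
    have h := hweak wb
    have hwbeq : ∀ x, wb x = w x := fun x => rfl
    have := Metric.tendsto_atTop.mp h (γ/8) (by positivity)
    obtain ⟨n1, hn1⟩ := this
    rw [eventually_atTop]
    refine ⟨n1, fun n hn => ?_⟩
    have := (hn1 n hn).le
    simpa [Real.dist_eq, hwbeq, hPdef] using this
  obtain ⟨n0, hn0⟩ := eventually_atTop.mp (hev1.and hev2)
  refine ⟨n0, fun n hn E hEmeas hEsmall => ?_⟩
  obtain ⟨hcn, hPn⟩ := hn0 n hn
  by_contra hcon
  push_neg at hcon
  -- decomposition
  set rn : X → ℝ≥0∞ := (ν n).rnDeriv m with hrn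
  have hrnmeas : Measurable rn := Measure.measurable_rnDeriv _ _
  set sg : Measure X := (ν n).singularPart m with hsg
  have hdec : (ν n) = sg + m.withDensity rn :=
    ((ν n).haveLebesgueDecomposition_add m).symm ▸ rfl
  obtain ⟨S, hSmeas, hS1, hS2⟩ := Measure.mutuallySingular_singularPart (ν n) m
  set F : Set X := E ∪ Sᶜ with hF
  have hFmeas : MeasurableSet F := hEmeas.union hSmeas.compl
  have hmF : m F ≤ ENNReal.ofReal δ := by
    refine le_trans (measure_union_le E Sᶜ) ?_
    rw [hS2, add_zero]
    exact hEsmall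
  have hsgF : sg F = sg Set.univ := by
    have hFc : sg Fᶜ = 0 := by
      apply measure_mono_null _ hS1
      rw [hF, Set.compl_union, compl_compl]
      exact Set.inter_subset_right
    have h := measure_add_measure_compl (μ := sg) hFmeas
    rw [hFc, add_zero] at h
    exact h
  have hνF : ENNReal.ofReal ε < ν n F :=
    lt_of_lt_of_le hcon (measure_mono Set.subset_union_left)
  have hνFne : ν n F ≠ ⊤ := (measure_lt_top _ _).ne
  have hεF : ε ≤ (ν n F).toReal := by
    have h1 : (ENNReal.ofReal ε).toReal ≤ (ν n F).toReal :=
      ENNReal.toReal_mono hνFne hνF.le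
    rwa [ENNReal.toReal_ofReal hε.le] at h1
  -- a.e. facts
  have hwdK : m.withDensity rn Kᶜ = 0 := by
    have h1 : sg Kᶜ + m.withDensity rn Kᶜ = 0 := by
      rw [← Measure.add_apply, ← hdec]
      exact hνK n
    exact (add_eq_zero.mp h1).2
  have hrn0 : ∀ᵐ x ∂m, x ∉ K → rn x = 0 := by
    have h2 : ∫⁻ x in Kᶜ, rn x ∂m = 0 := by
      rwa [withDensity_apply rn hKm.compl] at hwdK
    have h3 : rn =ᵐ[m.restrict Kᶜ] 0 := (lintegral_eq_zero_iff hrnmeas).mp h2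
    have h4 := (ae_restrict_iff' hKm.compl).mp h3
    filter_upwards [h4] with x hx hxK
    exact hx hxK
  have hfin : ∀ᵐ x ∂m, rn x < ⊤ := Measure.rnDeriv_lt_top _ _
  -- test density V
  set V : X → ℝ≥0∞ := fun x => ENNReal.ofReal (a * u x ^ (a-1)) with hVdef
  have hVmeas : Measurable V :=
    ENNReal.measurable_ofReal.comp ((hucont.measurable.pow measurable_const).const_mul a)
  have huexp : ∀ x, u x ^ (a-1) ≤ η ^ (a-1) := fun x =>
    Real.rpow_le_rpow_of_nonpos hη0 (hulo x) (by linarith)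
  have huexp2 : ∀ x, C1 ^ (a-1) ≤ u x ^ (a-1) := fun x =>
    Real.rpow_le_rpow_of_nonpos (hu0 x) (huhi x) (by linarith)
  have hVle : ∀ x, V x ≤ ENNReal.ofReal (a * η ^ (a-1)) := fun x =>
    ENNReal.ofReal_le_ofReal (mul_le_mul_of_nonneg_left (huexp x) ha.le)
  have hVge : ∀ x, ENNReal.ofReal (a * C1 ^ (a-1)) ≤ V x := fun x =>
    ENNReal.ofReal_le_ofReal (mul_le_mul_of_nonneg_left (huexp2 x) ha.le)
  -- pointwise bounds
  have hptT : ∀ᵐ x ∂m, rn x ^ a ≤ ENNReal.ofReal (T^a) + ENNReal.ofReal (T^(a-1)) * rn x := by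
    filter_upwards [hfin] with x hx
    have ht0 : (0:ℝ) ≤ (rn x).toReal := ENNReal.toReal_nonneg
    have htan := rpow_tangent ha ha1 hT0 ht0
    have h1 : rn x ^ a = ENNReal.ofReal ((rn x).toReal ^ a) := by
      conv_lhs => rw [← ENNReal.ofReal_toReal hx.ne]
      rw [ENNReal.ofReal_rpow_of_nonneg ht0 ha.le]
    rw [h1]
    have hTa1 : (0:ℝ) ≤ T ^ (a-1) := Real.rpow_nonneg hT0.le _
    calc ENNReal.ofReal ((rn x).toReal ^ a)
        ≤ ENNReal.ofReal (T^a + T^(a-1) * (rn x).toReal) := by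
          apply ENNReal.ofReal_le_ofReal
          nlinarith [mul_nonneg hTa1 ht0, hTa.le]
      _ = ENNReal.ofReal (T^a) + ENNReal.ofReal (T^(a-1)) * rn x := by
          rw [ENNReal.ofReal_add hTa.le (mul_nonneg hTa1 ht0),
            ENNReal.ofReal_mul hTa1, ENNReal.ofReal_toReal hx.ne]
  have hptU : ∀ᵐ x ∂m, rn x ^ a ≤
      K.indicator (fun y => ENNReal.ofReal ((1-a) * u y ^ a)) x + V x * rn x := by
    filter_upwards [hfin, hrn0] with x hx hx0
    by_cases hxK : x ∈ K
    · rw [Set.indicator_of_mem hxK]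
      have ht0 : (0:ℝ) ≤ (rn x).toReal := ENNReal.toReal_nonneg
      have htan := rpow_tangent ha ha1 (hu0 x) ht0
      have h1 : rn x ^ a = ENNReal.ofReal ((rn x).toReal ^ a) := by
        conv_lhs => rw [← ENNReal.ofReal_toReal hx.ne]
        rw [ENNReal.ofReal_rpow_of_nonneg ht0 ha.le]
      rw [h1]
      have hua : (0:ℝ) ≤ (1-a) * u x ^ a :=
        mul_nonneg (by linarith) (Real.rpow_nonneg (hu0 x).le _)
      have hua2 : (0:ℝ) ≤ a * u x ^ (a-1) :=
        mul_nonneg ha.le (Real.rpow_nonneg (hu0 x).le _)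
      calc ENNReal.ofReal ((rn x).toReal ^ a)
          ≤ ENNReal.ofReal ((1-a) * u x ^ a + a * u x ^ (a-1) * (rn x).toReal) := by
            apply ENNReal.ofReal_le_ofReal
            linarith [htan]
        _ = ENNReal.ofReal ((1-a) * u x ^ a) + V x * rn x := by
            rw [ENNReal.ofReal_add hua (by nlinarith [mul_nonneg hua2 ht0]),
              ENNReal.ofReal_mul hua2, ENNReal.ofReal_toReal hx.ne]
    · rw [hx0 hxK, ENNReal.zero_rpow_of_pos ha]
      exact zero_le
  -- lintegral chain
  set Ln : ℝ≥0∞ := ∫⁻ x, rn x ^ a ∂m with hLn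
  have hrnint1 : ∫⁻ x, rn x ∂m ≤ 1 := by
    have h := Measure.lintegral_rnDeriv_le (μ := ν n) (ν := m)
    simpa [measure_univ] using h
  have hb1 : ∫⁻ x in F, rn x ^ a ∂m
      ≤ ENNReal.ofReal (T^a) * ENNReal.ofReal δ + ENNReal.ofReal (T^(a-1)) := by
    calc ∫⁻ x in F, rn x ^ a ∂m
        ≤ ∫⁻ x in F, (ENNReal.ofReal (T^a) + ENNReal.ofReal (T^(a-1)) * rn x) ∂m :=
          lintegral_mono_ae (ae_restrict_of_ae hptT)
      _ = ENNReal.ofReal (T^a) * m F + ENNReal.ofReal (T^(a-1)) * ∫⁻ x in F, rn x ∂m := by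
          rw [lintegral_add_left measurable_const, lintegral_const,
            Measure.restrict_apply_univ, lintegral_const_mul _ hrnmeas]
      _ ≤ ENNReal.ofReal (T^a) * ENNReal.ofReal δ + ENNReal.ofReal (T^(a-1)) * 1 := by
          apply add_le_add (mul_le_mul_right hmF _)
          apply mul_le_mul_right
          exact le_trans (setLIntegral_le_lintegral _ _) hrnint1
      _ = ENNReal.ofReal (T^a) * ENNReal.ofReal δ + ENNReal.ofReal (T^(a-1)) := by
          rw [mul_one]
  set Wint : ℝ≥0∞ := ∫⁻ x in K, ENNReal.ofReal ((1-a) * u x ^ a) ∂m with hWint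
  have hWmeas : Measurable (fun x => ENNReal.ofReal ((1-a) * u x ^ a)) :=
    ENNReal.measurable_ofReal.comp ((hucont.measurable.pow measurable_const).const_mul _)
  have hb2 : ∫⁻ x in Fᶜ, rn x ^ a ∂m ≤ Wint + ∫⁻ x in Fᶜ, V x * rn x ∂m := by
    calc ∫⁻ x in Fᶜ, rn x ^ a ∂m
        ≤ ∫⁻ x in Fᶜ, (K.indicator (fun y => ENNReal.ofReal ((1-a) * u y ^ a)) x
            + V x * rn x) ∂m := lintegral_mono_ae (ae_restrict_of_ae hptU)
      _ = (∫⁻ x in Fᶜ, K.indicator (fun y => ENNReal.ofReal ((1-a) * u y ^ a)) x ∂m)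
            + ∫⁻ x in Fᶜ, V x * rn x ∂m := by
          rw [lintegral_add_left (hWmeas.indicator hKm)]
      _ ≤ Wint + ∫⁻ x in Fᶜ, V x * rn x ∂m := by
          apply add_le_add_left
          rw [hWint, ← lintegral_indicator hKm _]
          exact setLIntegral_le_lintegral _ _
  have hVrn : (∫⁻ x in F, V x * rn x ∂m) + ∫⁻ x in Fᶜ, V x * rn x ∂m
      = ∫⁻ x, V x * rn x ∂m := lintegral_add_compl _ hFmeas
  have hVν : ∫⁻ x, V x ∂(ν n) = (∫⁻ x, V x ∂sg) + ∫⁻ x, V x * rn x ∂m := by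
    rw [hdec, lintegral_add_measure]
    congr 1
    rw [lintegral_withDensity_eq_lintegral_mul m hrnmeas hVmeas]
    apply lintegral_congr
    intro x
    exact mul_comm _ _
  have hsbound : ENNReal.ofReal (a * C1^(a-1)) * sg Set.univ ≤ ∫⁻ x, V x ∂sg := by
    calc ENNReal.ofReal (a * C1^(a-1)) * sg Set.univ
        = ∫⁻ _, ENNReal.ofReal (a * C1^(a-1)) ∂sg := (lintegral_const _).symm
      _ ≤ ∫⁻ x, V x ∂sg := lintegral_mono (fun x => hVge x)
  have hFbound : ENNReal.ofReal (a * C1^(a-1)) * ν n F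
      ≤ (∫⁻ x, V x ∂sg) + ∫⁻ x in F, V x * rn x ∂m := by
    have hνnF : ν n F = sg Set.univ + ∫⁻ x in F, rn x ∂m := by
      rw [hdec, Measure.add_apply, withDensity_apply rn hFmeas, hsgF]
    rw [hνnF, mul_add]
    apply add_le_add hsbound
    calc ENNReal.ofReal (a * C1^(a-1)) * ∫⁻ x in F, rn x ∂m
        = ∫⁻ x in F, ENNReal.ofReal (a * C1^(a-1)) * rn x ∂m :=
          (lintegral_const_mul _ hrnmeas).symm
      _ ≤ ∫⁻ x in F, V x * rn x ∂m :=
          lintegral_mono (fun x => mul_le_mul_left (hVge x) _)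
  have hmain : Ln + ENNReal.ofReal (a * C1^(a-1)) * ν n F
      ≤ (ENNReal.ofReal (T^a) * ENNReal.ofReal δ + ENNReal.ofReal (T^(a-1)))
          + Wint + ∫⁻ x, V x ∂(ν n) := by
    have hsplit : Ln = (∫⁻ x in F, rn x ^ a ∂m) + ∫⁻ x in Fᶜ, rn x ^ a ∂m :=
      (lintegral_add_compl _ hFmeas).symm
    rw [hsplit, hVν, ← hVrn]
    refine le_trans (add_le_add (add_le_add hb1 hb2) hFbound) (le_of_eq ?_)
    ring
  -- finiteness
  have hWfin : Wint ≠ ⊤ := by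
    have hle : Wint ≤ ENNReal.ofReal ((1-a) * C1^a) * m K := by
      rw [hWint]
      calc ∫⁻ x in K, ENNReal.ofReal ((1-a) * u x ^ a) ∂m
          ≤ ∫⁻ _ in K, ENNReal.ofReal ((1-a) * C1^a) ∂m := by
            apply lintegral_mono
            intro x
            apply ENNReal.ofReal_le_ofReal
            exact mul_le_mul_of_nonneg_left
              (Real.rpow_le_rpow (hu0 x).le (huhi x) ha.le) (by linarith)
        _ = ENNReal.ofReal ((1-a) * C1^a) * m K := by
            rw [lintegral_const, Measure.restrict_apply_univ]
    exact ne_top_of_le_ne_top (ENNReal.mul_ne_top ENNReal.ofReal_ne_top hKfin) hle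
  have hVνle : ∫⁻ x, V x ∂(ν n) ≤ ENNReal.ofReal (a * η^(a-1)) := by
    calc ∫⁻ x, V x ∂(ν n) ≤ ∫⁻ _, ENNReal.ofReal (a * η^(a-1)) ∂(ν n) := lintegral_mono hVle
      _ = ENNReal.ofReal (a * η^(a-1)) := by rw [lintegral_const, measure_univ, mul_one]
  have hVνfin : ∫⁻ x, V x ∂(ν n) ≠ ⊤ := ne_top_of_le_ne_top ENNReal.ofReal_ne_top hVνle
  have hTfin : (ENNReal.ofReal (T^a) * ENNReal.ofReal δ + ENNReal.ofReal (T^(a-1))) ≠ ⊤ :=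
    ENNReal.add_ne_top.mpr ⟨ENNReal.mul_ne_top ENNReal.ofReal_ne_top ENNReal.ofReal_ne_top,
      ENNReal.ofReal_ne_top⟩
  have hRHSfin : (ENNReal.ofReal (T^a) * ENNReal.ofReal δ + ENNReal.ofReal (T^(a-1)))
      + Wint + (∫⁻ x, V x ∂(ν n)) ≠ ⊤ :=
    ENNReal.add_ne_top.mpr ⟨ENNReal.add_ne_top.mpr ⟨hTfin, hWfin⟩, hVνfin⟩
  have hLfin : Ln ≠ ⊤ := by
    refine ne_top_of_le_ne_top hRHSfin (le_trans ?_ hmain)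
    exact le_add_right le_rfl
  have hprodfin : ENNReal.ofReal (a * C1^(a-1)) * ν n F ≠ ⊤ :=
    ENNReal.mul_ne_top ENNReal.ofReal_ne_top hνFne
  -- pass to real numbers
  have hreal := ENNReal.toReal_mono hRHSfin hmain
  rw [ENNReal.toReal_add hLfin hprodfin, ENNReal.toReal_add (ENNReal.add_ne_top.mpr ⟨hTfin, hWfin⟩) hVνfin,
    ENNReal.toReal_add hTfin hWfin, ENNReal.toReal_add
      (ENNReal.mul_ne_top ENNReal.ofReal_ne_top ENNReal.ofReal_ne_top) ENNReal.ofReal_ne_top,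
    ENNReal.toReal_mul, ENNReal.toReal_mul,
    ENNReal.toReal_ofReal (mul_nonneg ha.le hC1a.le),
    ENNReal.toReal_ofReal hTa.le, ENNReal.toReal_ofReal hδ0.le,
    ENNReal.toReal_ofReal (Real.rpow_nonneg hT0.le _)] at hreal
  -- identify the real quantities
  have hcnLn : ∫ x, (rn x).toReal ^ a ∂m = Ln.toReal := by
    rw [hLn, integral_eq_lintegral_of_nonneg_ae
      (Eventually.of_forall fun x => Real.rpow_nonneg ENNReal.toReal_nonneg a)
      ((hrnmeas.ennreal_toReal.pow measurable_const).aestronglyMeasurable)]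
    congr 1
    apply lintegral_congr_ae
    filter_upwards [hfin] with x hx
    rw [← ENNReal.ofReal_rpow_of_nonneg ENNReal.toReal_nonneg ha.le,
      ENNReal.ofReal_toReal hx.ne]
  have hWreal : Wint.toReal = (1-a) * ∫ x in K, u x ^ a ∂m := by
    rw [hWint, ← integral_const_mul, integral_eq_lintegral_of_nonneg_ae
      (Eventually.of_forall fun x => mul_nonneg (by linarith)
        (Real.rpow_nonneg (hu0 x).le a))
      (((hucont.measurable.pow measurable_const).const_mul _).aestronglyMeasurable)]
  have hVreal : (∫⁻ x, V x ∂(ν n)).toReal = a * ∫ x, w x ∂(ν n) := by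
    rw [hVdef, ← integral_const_mul, integral_eq_lintegral_of_nonneg_ae
      (Eventually.of_forall fun x => mul_nonneg ha.le (Real.rpow_nonneg (hu0 x).le _))
      (((hucont.measurable.pow measurable_const).const_mul _).aestronglyMeasurable)]
  rw [← hcnLn, hWreal, hVreal] at hreal
  -- numeric conclusion
  set cn : ℝ := ∫ x, (rn x).toReal ^ a ∂m with hcn0
  set Pn : ℝ := ∫ x, w x ∂(ν n) with hPn0
  have hTδ : T^a * δ ≤ γ/16 := by
    have hδeq : (T^a + 1) * δ = γ/16 := by
      rw [hδdef]
      field_simp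
    nlinarith [hδ0]
  have hγle : γ ≤ a * C1^(a-1) * (ν n F).toReal := by
    rw [hγdef]
    exact mul_le_mul_of_nonneg_left hεF (by positivity)
  have habs1 := abs_le.mp hcn
  have habs2 := abs_le.mp hPn
  have haPn : a * Pn ≤ a * P + γ/8 := by
    have h1 : a * (Pn - P) ≤ a * (γ/8) := mul_le_mul_of_nonneg_left habs2.2 ha.le
    nlinarith
  have hWP : (1-a) * (∫ x in K, u x ^ a ∂m) + a * P ≤ c + γ/2 := by
    rw [← hcK, ← hPK]
    exact hugood
  linarith [hreal, habs1.1, hγle, haPn, hWP, hTδ, hTsmall]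

/-- The internal energy `U_N(ν) = −∫ ρ_ν^{1−1/N} dm`, where `ρ_ν` is the density of the
absolutely continuous part of `ν` with respect to `m` (Lebesgue decomposition
`ν = ρ_ν·m + ν^s`, `ν^s ⊥ m`). -/
noncomputable def internalEnergy {X : Type*} [MeasurableSpace X]
    (m ν : Measure X) (N : ℝ) : ℝ :=
  -∫ x, ((ν.rnDeriv m x).toReal) ^ (1 - 1 / N) ∂m

/-- If `μ = ρ·m` has bounded density and bounded support, and `(ν n)` are probability
measures concentrated on a fixed bounded set, converging to `μ` weakly in duality with
bounded continuous functions and with `U_N(ν n) → U_N(μ)`, then `ν n → μ` in duality with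
bounded Borel functions. -/
theorem convergence_in_duality_with_bounded_borel
    {X : Type*} [MetricSpace X] [ProperSpace X] [MeasurableSpace X] [BorelSpace X]
    (m : Measure X) [IsLocallyFiniteMeasure m]
    (N : ℝ) (hN : 1 < N)
    (ρ : X → ℝ) (hρmeas : Measurable ρ) (hρnonneg : ∀ x, 0 ≤ ρ x)
    (hρbdd : ∃ C : ℝ, ∀ x, ρ x ≤ C)
    (hρsupp : Bornology.IsBounded (tsupport ρ))
    (μ : Measure X) (hμ : μ = m.withDensity (fun x => ENNReal.ofReal (ρ x)))
    [IsProbabilityMeasure μ]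
    (ν : ℕ → Measure X) [∀ n, IsProbabilityMeasure (ν n)]
    (B : Set X) (hB : Bornology.IsBounded B) (hνB : ∀ n, ν n Bᶜ = 0)
    (hweak : ∀ f : BoundedContinuousFunction X ℝ,
      Tendsto (fun n => ∫ x, f x ∂(ν n)) atTop (nhds (∫ x, f x ∂μ)))
    (hUN : Tendsto (fun n => internalEnergy m (ν n) N) atTop
      (nhds (internalEnergy m μ N))) :
    ∀ h : X → ℝ, Measurable h → (∃ C : ℝ, ∀ x, |h x| ≤ C) →
      Tendsto (fun n => ∫ x, h x ∂(ν n)) atTop (nhds (∫ x, h x * ρ x ∂m)) := by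
  intro h hmeas hbdd
  obtain ⟨C, hC⟩ := hbdd
  -- X is nonempty
  rcases isEmpty_or_nonempty X with hX | hX
  · exfalso
    have h1 : μ Set.univ = 1 := measure_univ
    rw [Set.univ_eq_empty_iff.mpr hX, measure_empty] at h1
    exact zero_ne_one h1
  -- instances
  haveI : SigmaCompactSpace X := by infer_instance
  haveI : SigmaFinite m := by infer_instance
  haveI : m.WeaklyRegular := by infer_instance
  have hC0 : (0:ℝ) ≤ C := le_trans (abs_nonneg _) (hC hX.some)
  obtain ⟨Cρ, hCρ⟩ := hρbdd
  set C1 : ℝ := max Cρ 1 with hC1def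
  have hC1 : (1:ℝ) ≤ C1 := le_max_right _ _
  have hC10 : (0:ℝ) < C1 := by linarith
  have hρle : ∀ x, ρ x ≤ C1 := fun x => le_trans (hCρ x) (le_max_left _ _)
  set a : ℝ := 1 - 1/N with hadef
  have hN0 : (0:ℝ) < N := by linarith
  have ha : 0 < a := by
    rw [hadef]
    have : 1/N < 1 := by
      rw [div_lt_one hN0]; exact hN
    linarith
  have ha1 : a < 1 := by
    rw [hadef]
    have : 0 < 1/N := by positivity
    linarith
  -- the compact set K
  obtain ⟨r, hr⟩ := (hB.union hρsupp).subset_closedBall hX.some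
  set K : Set X := Metric.closedBall hX.some r with hKdef
  have hKc : IsClosed K := Metric.isClosed_closedBall
  have hKm : MeasurableSet K := hKc.measurableSet
  have hKfin : m K ≠ ⊤ := ((isCompact_closedBall _ _).measure_lt_top).ne
  have hBK : B ⊆ K := (Set.union_subset_iff.mp hr).1
  have hsuppK : tsupport ρ ⊆ K := (Set.union_subset_iff.mp hr).2
  have hρK : ∀ x, x ∉ K → ρ x = 0 := fun x hx =>
    image_eq_zero_of_notMem_tsupport (fun hmem => hx (hsuppK hmem))
  have hνK : ∀ n, (ν n) Kᶜ = 0 := fun n =>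
    measure_mono_null (Set.compl_subset_compl.mpr hBK) (hνB n)
  have hμK : μ Kᶜ = 0 := by
    rw [hμ, withDensity_apply _ hKm.compl]
    have hae : (fun x => ENNReal.ofReal (ρ x)) =ᵐ[m.restrict Kᶜ] 0 := by
      rw [EventuallyEq, ae_restrict_iff' hKm.compl]
      apply ae_of_all
      intro x hx
      simp [hρK x hx]
    rw [lintegral_congr_ae hae]
    simp
  -- representation of integrals against μ
  have hμrepr : ∀ g : X → ℝ, (∫ x, g x ∂μ) = ∫ x, g x * ρ x ∂m := by
    intro g
    rw [hμ]
    have heq : (fun x => ENNReal.ofReal (ρ x))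
        = (fun x => (((fun y => (ρ y).toNNReal) x : ℝ≥0) : ℝ≥0∞)) := by
      funext x; rfl
    rw [heq, integral_withDensity_eq_integral_smul hρmeas.real_toNNReal]
    apply integral_congr_ae
    apply ae_of_all
    intro x
    simp [NNReal.smul_def, Real.coe_toNNReal _ (hρnonneg x), mul_comm]
  have hweak' : ∀ f : BoundedContinuousFunction X ℝ,
      Tendsto (fun n => ∫ x, f x ∂(ν n)) atTop (nhds (∫ x, f x * ρ x ∂m)) := by
    intro f
    rw [← hμrepr f]
    exact hweak f
  -- energy convergence restated
  have hrnμ : μ.rnDeriv m =ᵐ[m] fun x => ENNReal.ofReal (ρ x) := by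
    rw [hμ]
    exact Measure.rnDeriv_withDensity m (ENNReal.measurable_ofReal.comp hρmeas)
  have hcμ : ∫ x, ((μ.rnDeriv m x).toReal) ^ a ∂m = ∫ x, ρ x ^ a ∂m := by
    apply integral_congr_ae
    filter_upwards [hrnμ] with x hx
    rw [hx, ENNReal.toReal_ofReal (hρnonneg x)]
  have hc : Tendsto (fun n => ∫ x, (((ν n).rnDeriv m) x).toReal ^ a ∂m) atTop
      (nhds (∫ x, ρ x ^ a ∂m)) := by
    have h1 := hUN.neg
    simp only [internalEnergy, neg_neg] at h1
    rw [hcμ] at h1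
    exact h1
  -- main ε-argument
  rw [Metric.tendsto_atTop]
  intro ε hε
  set ε' : ℝ := ε / (16 * (C+1)) with hε'def
  have hε'pos : 0 < ε' := by positivity
  obtain ⟨δ0, hδ0, n0, hB0⟩ := unif_small m hKc hKfin hρmeas hρnonneg hC1 hρle hρK ha ha1
    ν hνK hweak' hc hε'pos
  set δ1 : ℝ := min δ0 (ε / (16 * (C+1) * C1)) with hδ1def
  have hδ1pos : 0 < δ1 := lt_min hδ0 (by positivity)
  set t : ℝ := ε/8 with htdef
  have ht : 0 < t := by positivity
  set κ : ℝ := δ1 * t with hκdef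
  have hκpos : 0 < κ := by positivity
  haveI : IsFiniteMeasure (m.restrict K) :=
    ⟨by rw [Measure.restrict_apply_univ]; exact lt_top_iff_ne_top.mpr hKfin⟩
  have hfhint : Integrable (K.indicator h) m := by
    rw [integrable_indicator_iff hKm]
    exact Integrable.mono' (integrable_const C) hmeas.aestronglyMeasurable
      (ae_of_all _ (fun x => by simpa using hC x))
  obtain ⟨g0, hg0, hg0int⟩ := hfhint.exists_boundedContinuous_integral_sub_le hκpos
  set g : X → ℝ := fun x => max (-C) (min (g0 x) C) with hgdef
  have hgcont : Continuous g := continuous_const.max (g0.continuous.min continuous_const)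
  have hgbdd : ∀ x, |g x| ≤ C := by
    intro x
    rw [abs_le]
    exact ⟨le_max_left _ _, max_le (by linarith) (min_le_right _ _)⟩
  have hgmeas : Measurable g := hgcont.measurable
  have hfhbdd : ∀ x, |K.indicator h x| ≤ C := by
    intro x
    by_cases hx : x ∈ K
    · rw [Set.indicator_of_mem hx]; exact hC x
    · rw [Set.indicator_of_notMem hx]; simpa using hC0
  have hgclose : ∀ x, |g x - K.indicator h x| ≤ |g0 x - K.indicator h x| := by
    intro x
    have hb := abs_le.mp (hfhbdd x)
    exact clamp_abs hb.1 hb.2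
  have hgint : Integrable g m := by
    apply Integrable.mono' hg0int.norm hgmeas.aestronglyMeasurable
    apply ae_of_all
    intro x
    have := clamp_abs (lo := -C) (hi := C) (t := g0 x) (v := 0) (by linarith) hC0
    simpa using this
  -- Markov inequality
  set A : Set X := {x | t < |K.indicator h x - g x|} with hAdef
  have hAmeas : MeasurableSet A :=
    measurableSet_lt measurable_const ((hmeas.indicator hKm).sub hgmeas).abs
  have hdiffint : Integrable (fun x => |K.indicator h x - g x|) m := (hfhint.sub hgint).abs
  have hmA : m A ≤ ENNReal.ofReal δ1 := by
    have hL1 : ∫ x, |K.indicator h x - g x| ∂m ≤ κ := by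
      calc ∫ x, |K.indicator h x - g x| ∂m
          ≤ ∫ x, ‖K.indicator h x - g0 x‖ ∂m := by
            apply integral_mono hdiffint (hfhint.sub hg0int).norm
            intro x
            simp only [Pi.sub_apply, Real.norm_eq_abs]
            rw [abs_sub_comm (K.indicator h x) (g x), abs_sub_comm (K.indicator h x) (g0 x)]
            exact hgclose x
        _ ≤ κ := hg0
    have hmarkov := mul_meas_ge_le_lintegral₀
      (μ := m) (ε := ENNReal.ofReal t)
      (f := fun x => ENNReal.ofReal (|K.indicator h x - g x|))
      (ENNReal.measurable_ofReal.comp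
        ((hmeas.indicator hKm).sub hgmeas).abs).aemeasurable
    have hsub : A ⊆ {x | ENNReal.ofReal t ≤ ENNReal.ofReal (|K.indicator h x - g x|)} :=
      fun x hx => ENNReal.ofReal_le_ofReal (le_of_lt hx)
    have hlin : ∫⁻ x, ENNReal.ofReal (|K.indicator h x - g x|) ∂m ≤ ENNReal.ofReal κ := by
      rw [← ofReal_integral_eq_lintegral_ofReal hdiffint
        (ae_of_all _ (fun x => abs_nonneg _))]
      exact ENNReal.ofReal_le_ofReal hL1
    have h1 : ENNReal.ofReal t * m A ≤ ENNReal.ofReal κ :=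
      le_trans (mul_le_mul_right (measure_mono hsub) _) (le_trans hmarkov hlin)
    have h2 : m A ≤ ENNReal.ofReal κ / ENNReal.ofReal t := by
      rw [ENNReal.le_div_iff_mul_le (Or.inl (by simpa using ht))
        (Or.inl ENNReal.ofReal_ne_top)]
      rwa [mul_comm]
    rwa [← ENNReal.ofReal_div_of_pos ht, hκdef, mul_div_cancel_right₀ _ ht.ne'] at h2
  -- the bounded continuous pairing
  set gb : BoundedContinuousFunction X ℝ :=
    BoundedContinuousFunction.ofNormedAddCommGroup g hgcont C
      (fun x => by simpa using hgbdd x) with hgbdef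
  have hgbcoe : ∀ x, gb x = g x := fun x => rfl
  obtain ⟨n1, hn1⟩ := Metric.tendsto_atTop.mp (hweak' gb) (ε/8) (by positivity)
  refine ⟨max n0 n1, fun n hn => ?_⟩
  have hnn0 : n ≥ n0 := le_trans (le_max_left _ _) hn
  have hnn1 : n ≥ n1 := le_trans (le_max_right _ _) hn
  have hνnA : ((ν n) A).toReal ≤ ε' := by
    have h1 := hB0 n hnn0 A hAmeas
      (le_trans hmA (ENNReal.ofReal_le_ofReal (min_le_left _ _)))
    have h2 := ENNReal.toReal_mono ENNReal.ofReal_ne_top h1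
    rwa [ENNReal.toReal_ofReal hε'pos.le] at h2
  have hμA : (μ A).toReal ≤ C1 * δ1 := by
    have h1 : μ A ≤ ENNReal.ofReal C1 * m A := by
      rw [hμ, withDensity_apply _ hAmeas]
      calc ∫⁻ x in A, ENNReal.ofReal (ρ x) ∂m
          ≤ ∫⁻ _ in A, ENNReal.ofReal C1 ∂m :=
            lintegral_mono (fun x => ENNReal.ofReal_le_ofReal (hρle x))
        _ = ENNReal.ofReal C1 * m A := by rw [lintegral_const, Measure.restrict_apply_univ]
    have h2 : μ A ≤ ENNReal.ofReal (C1 * δ1) := by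
      rw [ENNReal.ofReal_mul hC10.le]
      exact le_trans h1 (mul_le_mul_right (le_trans hmA le_rfl) _)
    have h3 := ENNReal.toReal_mono ENNReal.ofReal_ne_top h2
    rwa [ENNReal.toReal_ofReal (by positivity)] at h3
  have hνae : ∀ᵐ x ∂(ν n), x ∈ K := by
    rw [ae_iff]
    exact hνK n
  have hμae : ∀ᵐ x ∂μ, x ∈ K := by
    rw [ae_iff]
    exact hμK
  have hpt : ∀ x, x ∈ K → |h x - g x| ≤ t + (2*C) * A.indicator (fun _ => (1:ℝ)) x := by
    intro x hxK
    by_cases hxA : x ∈ A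
    · rw [Set.indicator_of_mem hxA, mul_one]
      have h1 := hC x
      have h2 := hgbdd x
      have h3 : |h x - g x| ≤ |h x| + |g x| := abs_sub _ _
      linarith
    · rw [Set.indicator_of_notMem hxA, mul_zero, add_zero]
      have h4 : ¬ t < |K.indicator h x - g x| := hxA
      rw [Set.indicator_of_mem hxK] at h4
      linarith [not_lt.mp h4]
  have key : ∀ P : Measure X, IsProbabilityMeasure P → (∀ᵐ x ∂P, x ∈ K) →
      |(∫ x, h x ∂P) - ∫ x, g x ∂P| ≤ t + (2*C) * (P A).toReal := by
    intro P hP hae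
    haveI := hP
    have hint_h : Integrable h P := Integrable.mono' (integrable_const C)
      hmeas.aestronglyMeasurable (ae_of_all _ fun x => by simpa using hC x)
    have hint_g : Integrable g P := Integrable.mono' (integrable_const C)
      hgmeas.aestronglyMeasurable (ae_of_all _ fun x => by simpa using hgbdd x)
    have hint_ind : Integrable (A.indicator (fun _ => (1:ℝ))) P :=
      (integrable_indicator_iff hAmeas).mpr
        (integrableOn_const (measure_lt_top _ _).ne)
    rw [← integral_sub hint_h hint_g]
    calc |∫ x, (h x - g x) ∂P| ≤ ∫ x, |h x - g x| ∂P := by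
          simpa [Real.norm_eq_abs] using
            norm_integral_le_integral_norm (μ := P) (fun x => h x - g x)
      _ ≤ ∫ x, (t + (2*C) * A.indicator (fun _ => (1:ℝ)) x) ∂P := by
          apply integral_mono_ae (hint_h.sub hint_g).abs
            ((integrable_const t).add (hint_ind.const_mul _))
          filter_upwards [hae] with x hx
          exact hpt x hx
      _ = t + (2*C) * (P A).toReal := by
          rw [integral_add (integrable_const t) (hint_ind.const_mul _),
            integral_const, integral_const_mul, integral_indicator_const _ hAmeas]
          simp [measure_univ, measureReal_def]
  have h1 := key (ν n) inferInstance hνae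
  have h2 := key μ inferInstance hμae
  have hpairn : |(∫ x, g x ∂(ν n)) - ∫ x, g x ∂μ| < ε/8 := by
    have := hn1 n hnn1
    rw [Real.dist_eq] at this
    have he1 : ∫ x, gb x ∂(ν n) = ∫ x, g x ∂(ν n) := rfl
    have he2 : ∫ x, gb x * ρ x ∂m = ∫ x, g x * ρ x ∂m := rfl
    rw [he1, he2, ← hμrepr g] at this
    exact this
  rw [Real.dist_eq]
  have hμh : ∫ x, h x ∂μ = ∫ x, h x * ρ x ∂m := hμrepr h
  have htri : |(∫ x, h x ∂(ν n)) - ∫ x, h x * ρ x ∂m|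
      ≤ |(∫ x, h x ∂(ν n)) - ∫ x, g x ∂(ν n)| + |(∫ x, g x ∂(ν n)) - ∫ x, g x ∂μ|
        + |(∫ x, g x ∂μ) - ∫ x, h x * ρ x ∂m| := by
    have := abs_sub_le (∫ x, h x ∂(ν n)) (∫ x, g x ∂(ν n)) (∫ x, h x * ρ x ∂m)
    have h5 := abs_sub_le (∫ x, g x ∂(ν n)) (∫ x, g x ∂μ) (∫ x, h x * ρ x ∂m)
    linarith
  have hlast : |(∫ x, g x ∂μ) - ∫ x, h x * ρ x ∂m| ≤ t + (2*C) * (μ A).toReal := by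
    rw [← hμh, abs_sub_comm]
    exact h2
  have hb1 : (2*C) * ((ν n) A).toReal ≤ 2*C*ε' := by
    apply mul_le_mul_of_nonneg_left hνnA (by linarith)
  have hb2 : (2*C) * (μ A).toReal ≤ 2*C*(C1 * δ1) := by
    apply mul_le_mul_of_nonneg_left hμA (by linarith)
  have hεhalf : 2*C*(ε / (16*(C+1))) ≤ ε/8 := by
    have hq : 2*C/(16*(C+1)) ≤ 1/8 := by
      rw [div_le_div_iff₀ (by positivity) (by norm_num)]
      nlinarith
    calc 2*C*(ε / (16*(C+1))) = (2*C/(16*(C+1)))*ε := by ring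
      _ ≤ (1/8)*ε := mul_le_mul_of_nonneg_right hq hε.le
      _ = ε/8 := by ring
  have hεb1 : 2*C*ε' ≤ ε/8 := by
    rw [hε'def]
    exact hεhalf
  have hεb2 : 2*C*(C1 * δ1) ≤ ε/8 := by
    have hd : δ1 ≤ ε / (16 * (C+1) * C1) := min_le_right _ _
    have h6 : C1 * δ1 ≤ C1 * (ε / (16 * (C+1) * C1)) :=
      mul_le_mul_of_nonneg_left hd hC10.le
    have h7 : C1 * (ε / (16 * (C+1) * C1)) = ε / (16 * (C+1)) := by
      field_simp
    rw [h7] at h6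
    have h8 : 2*C*(C1*δ1) ≤ 2*C*(ε / (16 * (C+1))) :=
      mul_le_mul_of_nonneg_left h6 (by linarith)
    exact le_trans h8 hεhalf
  have htb : t = ε/8 := rfl
  linarith [h1, hpairn, htri, hlast, hb1, hb2]
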